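/- Let ε > 0, let x and y be independent random variables each distributed as Lap(1/ε), and for real numbers α, β, γ define P(α, β, γ) = P[x < α ∧ y < β ∧ x + y < γ]. If γ < α + β, then for every τ ≥ 0, P(α+τ, β+τ, γ) ≤ e^{3τε} · P(α, β, γ). -/

import Mathlib

open MeasureTheory ProbabilityTheory
open scoped ENNReal

/-- The Laplace distribution `Lap(b)` on `ℝ`, with density `(1/(2b))·e^{−|x|/b}`. -/
noncomputable def lapMeasure (b : ℝ) : Measure ℝ :=
  volume.withDensity fun x => ENNReal.ofReal ((1 / (2 * b)) * Real.exp (-|x| / b))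

open ENNReal in
lemma prod_withDensity_aux {g : ℝ → ℝ≥0∞} (hg : Measurable g) :
    (volume.withDensity g).prod (volume.withDensity g)
      = (Measure.prod volume volume).withDensity (fun p => g p.1 * g p.2) := by
  ext S hS
  have hh : Measurable (S.indicator (fun p : ℝ × ℝ => g p.2)) :=
    (hg.comp measurable_snd).indicator hS
  have h1 : ∀ a : ℝ, (volume.withDensity g) (Prod.mk a ⁻¹' S)
      = ∫⁻ c, S.indicator (fun p : ℝ × ℝ => g p.2) (a, c) ∂volume := by
    intro a
    rw [withDensity_apply _ (measurable_prodMk_left hS),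
      ← lintegral_indicator (measurable_prodMk_left hS)]
    apply lintegral_congr
    intro c
    rcases em ((a, c) ∈ S) with hc | hc <;> simp [Set.indicator_apply, hc]
  rw [Measure.prod_apply hS, withDensity_apply _ hS, ← lintegral_indicator hS]
  simp_rw [h1]
  rw [lintegral_withDensity_eq_lintegral_mul volume hg hh.lintegral_prod_right',
    MeasureTheory.lintegral_prod _
      (Measurable.aemeasurable (Measurable.indicator (by fun_prop) hS))]
  apply lintegral_congr
  intro a
  simp only [Pi.mul_apply]
  rw [← lintegral_const_mul _ (show Measurable fun c : ℝ =>
      S.indicator (fun p : ℝ × ℝ => g p.2) (a, c) from hh.comp measurable_prodMk_left)]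
  apply lintegral_congr
  intro c
  rcases em ((a, c) ∈ S) with hc | hc <;> simp [Set.indicator_apply, hc]

/-- For independent `x, y ∼ Lap(1/ε)` and
`P(α,β,γ) = P[x < α ∧ y < β ∧ x + y < γ]`, if `γ < α + β` then for every `τ ≥ 0`,
`P(α+τ, β+τ, γ) ≤ e^{3τε}·P(α, β, γ)`. -/
theorem laplace_shift_small_gamma
    (Ω : Type) [MeasurableSpace Ω] (μ : Measure Ω) [IsProbabilityMeasure μ]
    (ε : ℝ) (hε : 0 < ε) (x y : Ω → ℝ) (hx : Measurable x) (hy : Measurable y)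
    (hxd : μ.map x = lapMeasure (1 / ε)) (hyd : μ.map y = lapMeasure (1 / ε))
    (hind : IndepFun x y μ) (α β γ : ℝ) (hγ : γ < α + β) (τ : ℝ) (hτ : 0 ≤ τ) :
    μ {ω | x ω < α + τ ∧ y ω < β + τ ∧ x ω + y ω < γ} ≤
      ENNReal.ofReal (Real.exp (3 * τ * ε)) *
        μ {ω | x ω < α ∧ y ω < β ∧ x ω + y ω < γ} := by
  have hb : (0 : ℝ) < 1 / ε := by positivity
  set g : ℝ → ℝ≥0∞ :=
    fun u => ENNReal.ofReal ((1 / (2 * (1 / ε))) * Real.exp (-|u| / (1 / ε))) with hgdef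
  have hg : Measurable g := by
    apply Measurable.ennreal_ofReal
    fun_prop
  have hν : lapMeasure (1 / ε) = volume.withDensity g := rfl
  set G : ℝ × ℝ → ℝ≥0∞ := fun p => g p.1 * g p.2 with hGdef
  have hG : Measurable G := (hg.comp measurable_fst).mul (hg.comp measurable_snd)
  have hpair : μ.map (fun ω => (x ω, y ω))
      = (Measure.prod volume volume).withDensity G := by
    rw [(indepFun_iff_map_prod_eq_prod_map_map hx.aemeasurable hy.aemeasurable).mp hind,
      hxd, hyd, hν, prod_withDensity_aux hg]
  have hS : ∀ α' β' : ℝ,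
      MeasurableSet {p : ℝ × ℝ | p.1 < α' ∧ p.2 < β' ∧ p.1 + p.2 < γ} := by
    intro α' β'
    exact (measurableSet_lt measurable_fst measurable_const).inter
      ((measurableSet_lt measurable_snd measurable_const).inter
        (measurableSet_lt (measurable_fst.add measurable_snd) measurable_const))
  have key : ∀ α' β' : ℝ,
      μ {ω | x ω < α' ∧ y ω < β' ∧ x ω + y ω < γ}
        = ∫⁻ p, ({p : ℝ × ℝ | p.1 < α' ∧ p.2 < β' ∧ p.1 + p.2 < γ}.indicator G) p
            ∂(Measure.prod volume volume) := by
    intro α' β'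
    have hpre : {ω | x ω < α' ∧ y ω < β' ∧ x ω + y ω < γ}
        = (fun ω => (x ω, y ω)) ⁻¹' {p : ℝ × ℝ | p.1 < α' ∧ p.2 < β' ∧ p.1 + p.2 < γ} :=
      rfl
    rw [hpre, ← Measure.map_apply (hx.prodMk hy) (hS α' β'), hpair,
      withDensity_apply _ (hS α' β'), ← lintegral_indicator (hS α' β')]
  -- single-variable density bound
  have hgb : ∀ u : ℝ, g (u + τ) ≤ ENNReal.ofReal (Real.exp (τ * ε)) * g u := by
    intro u
    rw [hgdef]
    simp only
    rw [← ENNReal.ofReal_mul (Real.exp_nonneg _)]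
    apply ENNReal.ofReal_le_ofReal
    rw [mul_comm (Real.exp (τ * ε)) _, mul_assoc]
    apply mul_le_mul_of_nonneg_left _ (by positivity)
    rw [← Real.exp_add]
    apply Real.exp_le_exp.mpr
    have habs : |u| - |u + τ| ≤ τ := by
      have := abs_sub_abs_le_abs_sub u (u + τ)
      have h2 : |u - (u + τ)| = τ := by
        rw [sub_add_cancel_left, abs_neg, abs_of_nonneg hτ]
      linarith
    have h1 : -|u + τ| / (1 / ε) = -|u + τ| * ε := by field_simp
    have h2 : -|u| / (1 / ε) = -|u| * ε := by field_simp
    rw [h1, h2]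
    nlinarith
  -- pointwise bound after shifting by (τ, τ)
  have hpt : ∀ p : ℝ × ℝ,
      ({p : ℝ × ℝ | p.1 < α + τ ∧ p.2 < β + τ ∧ p.1 + p.2 < γ}.indicator G) (p + (τ, τ))
        ≤ ENNReal.ofReal (Real.exp (3 * τ * ε)) *
          ({p : ℝ × ℝ | p.1 < α ∧ p.2 < β ∧ p.1 + p.2 < γ}.indicator G) p := by
    rintro ⟨a, c⟩
    have hadd : (a, c) + (τ, τ) = (a + τ, c + τ) := rfl
    rw [hadd]
    by_cases h : (a + τ, c + τ) ∈ {p : ℝ × ℝ | p.1 < α + τ ∧ p.2 < β + τ ∧ p.1 + p.2 < γ}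
    · obtain ⟨h1, h2, h3⟩ := id h
      simp only at h1 h2 h3
      have hmem : (a, c) ∈ {p : ℝ × ℝ | p.1 < α ∧ p.2 < β ∧ p.1 + p.2 < γ} := by
        refine ⟨by linarith, by linarith, by linarith⟩
      rw [Set.indicator_of_mem h, Set.indicator_of_mem hmem]
      calc G (a + τ, c + τ) = g (a + τ) * g (c + τ) := rfl
        _ ≤ (ENNReal.ofReal (Real.exp (τ * ε)) * g a) *
              (ENNReal.ofReal (Real.exp (τ * ε)) * g c) := mul_le_mul' (hgb a) (hgb c)
        _ = (ENNReal.ofReal (Real.exp (τ * ε)) * ENNReal.ofReal (Real.exp (τ * ε))) *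
              (g a * g c) := by ring
        _ = ENNReal.ofReal (Real.exp (τ * ε + τ * ε)) * G (a, c) := by
            rw [← ENNReal.ofReal_mul (Real.exp_nonneg _), ← Real.exp_add]
        _ ≤ ENNReal.ofReal (Real.exp (3 * τ * ε)) * G (a, c) := by
            apply mul_le_mul_left
            apply ENNReal.ofReal_le_ofReal
            apply Real.exp_le_exp.mpr
            nlinarith
    · rw [Set.indicator_of_notMem h]
      exact zero_le
  -- assemble
  rw [key (α + τ) (β + τ), key α β]
  calc ∫⁻ p, ({p : ℝ × ℝ | p.1 < α + τ ∧ p.2 < β + τ ∧ p.1 + p.2 < γ}.indicator G) p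
        ∂(Measure.prod volume volume)
      = ∫⁻ p, ({p : ℝ × ℝ | p.1 < α + τ ∧ p.2 < β + τ ∧ p.1 + p.2 < γ}.indicator G)
          (p + (τ, τ)) ∂(Measure.prod volume volume) :=
        (lintegral_add_right_eq_self _ (τ, τ)).symm
    _ ≤ ∫⁻ p, ENNReal.ofReal (Real.exp (3 * τ * ε)) *
          ({p : ℝ × ℝ | p.1 < α ∧ p.2 < β ∧ p.1 + p.2 < γ}.indicator G) p
          ∂(Measure.prod volume volume) := lintegral_mono hpt
    _ = ENNReal.ofReal (Real.exp (3 * τ * ε)) *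
          ∫⁻ p, ({p : ℝ × ℝ | p.1 < α ∧ p.2 < β ∧ p.1 + p.2 < γ}.indicator G) p
          ∂(Measure.prod volume volume) :=
        lintegral_const_mul _ (hG.indicator (hS α β))
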